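/- Let Ω ⊆ ℝ^M be a bounded Lebesgue-measurable set, N ∈ ℕ, and let C₁, γ > 0. For each n ∈ ℕ let Hₙ : Ω × ℝ^N → ℝ be a Carathéodory function such that |Hₙ(x,ξ)| ≤ C₁(1 + |ξ|^γ) for a.e. x ∈ Ω, all ξ ∈ ℝ^N and all n. Suppose H : Ω × ℝ^N → ℝ is a Carathéodory function such that for a.e. x ∈ Ω, Hₙ(x,·) → H(x,·) uniformly on every compact subset of ℝ^N as n → ∞. If p ∈ [γ, ∞) and (uₙ) is a sequence of measurable functions Ω → ℝ^N with uₙ → u in L^p(Ω; ℝ^N), then Hₙ(·, uₙ(·)) → H(·, u(·)) in L^{p/γ}(Ω). -/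

import Mathlib

open MeasureTheory Filter Set Topology
open scoped ENNReal

/-- The `L^p(Ω)` (quasi-)norm of a function `g`, where `Ω ⊆ ℝ^M` carries the Lebesgue measure. -/
noncomputable def lpNorm {M : ℕ} {E : Type*} [NormedAddCommGroup E]
    (Ω : Set (Fin M → ℝ)) (p : ℝ) (g : (Fin M → ℝ) → E) : ℝ≥0∞ :=
  eLpNorm g (ENNReal.ofReal p) (volume.restrict Ω)

/-- Measurability of Carathéodory superpositions. -/
lemma superpos_aemeas {M N : ℕ} (μ : Measure (Fin M → ℝ))
    (H : (Fin M → ℝ) → EuclideanSpace ℝ (Fin N) → ℝ)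
    (hmeas : ∀ ξ, AEMeasurable (fun x => H x ξ) μ)
    (hcont : ∀ᵐ x ∂μ, Continuous (H x))
    {v : (Fin M → ℝ) → EuclideanSpace ℝ (Fin N)} (hv : AEStronglyMeasurable v μ) :
    AEMeasurable (fun x => H x (v x)) μ := by
  obtain ⟨w, hw, hvw⟩ := hv
  have hsimple : ∀ s : SimpleFunc (Fin M → ℝ) (EuclideanSpace ℝ (Fin N)),
      AEMeasurable (fun x => H x (s x)) μ := by
    intro s
    have heq : (fun x => H x (s x))
        = fun x => ∑ c ∈ s.range, (s ⁻¹' {c}).indicator (fun y => H y c) x := by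
      funext x
      rw [Finset.sum_eq_single_of_mem (s x) (s.mem_range_self x)]
      · exact (Set.indicator_of_mem (Set.mem_preimage.mpr (Set.mem_singleton _))
          (fun y => H y (s x))).symm
      · intro c _ hne
        exact Set.indicator_of_notMem
          (fun h => hne (Set.mem_singleton_iff.1 (Set.mem_preimage.1 h)).symm) _
    rw [heq]
    exact Finset.aemeasurable_fun_sum _ fun c _ => (hmeas c).indicator (s.measurableSet_fiber c)
  have key : AEMeasurable (fun x => H x (w x)) μ := by
    apply aemeasurable_of_tendsto_metrizable_ae' (f := fun n x => H x (hw.approx n x))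
      (fun n => hsimple _)
    filter_upwards [hcont] with x hx
    exact (hx.tendsto _).comp (hw.tendsto_approx x)
  exact key.congr (hvw.mono fun x hx => by show H x (w x) = H x (v x); rw [hx])

lemma rpow_add_le_aux {a b : ℝ} (γ : ℝ) (ha : 0 ≤ a) (hb : 0 ≤ b) (hγ : 0 < γ) :
    (a + b) ^ γ ≤ 2 ^ γ * (a ^ γ + b ^ γ) := by
  have h1 : a + b ≤ 2 * max a b := by
    rcases le_total a b with h | h
    · simp [max_eq_right h]; nlinarith
    · simp [max_eq_left h]; nlinarith
  calc (a + b) ^ γ ≤ (2 * max a b) ^ γ :=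
        Real.rpow_le_rpow (by positivity) h1 hγ.le
    _ = 2 ^ γ * (max a b) ^ γ := Real.mul_rpow (by norm_num) (le_max_iff.2 (Or.inl ha))
    _ ≤ 2 ^ γ * (a ^ γ + b ^ γ) := by
        have : (max a b) ^ γ ≤ a ^ γ + b ^ γ := by
          rcases le_total a b with h | h
          · rw [max_eq_right h]
            nlinarith [Real.rpow_nonneg ha γ]
          · rw [max_eq_left h]
            nlinarith [Real.rpow_nonneg hb γ]
        have h2 : (0:ℝ) ≤ 2 ^ γ := Real.rpow_nonneg (by norm_num) γ
        nlinarith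

/-- convergence of Carathéodory superpositions `Hₙ(·, uₙ)` to `H(·, u)`
in `L^{p/γ}(Ω)` when `uₙ → u` in `L^p(Ω; ℝ^N)`. -/
theorem caratheodory_superposition_tendsto
    (M N : ℕ) (Ω : Set (Fin M → ℝ)) (hΩmeas : MeasurableSet Ω)
    (hΩbdd : Bornology.IsBounded Ω)
    (C₁ γ : ℝ) (hC₁ : 0 < C₁) (hγ : 0 < γ)
    (Hn : ℕ → (Fin M → ℝ) → EuclideanSpace ℝ (Fin N) → ℝ)
    (H : (Fin M → ℝ) → EuclideanSpace ℝ (Fin N) → ℝ)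
    -- each `Hₙ` is a Carathéodory function
    (hHnMeas : ∀ n ξ, AEMeasurable (fun x => Hn n x ξ) (volume.restrict Ω))
    (hHnCont : ∀ n, ∀ᵐ x ∂(volume.restrict Ω), Continuous (Hn n x))
    -- `H` is a Carathéodory function
    (hHMeas : ∀ ξ, AEMeasurable (fun x => H x ξ) (volume.restrict Ω))
    (hHCont : ∀ᵐ x ∂(volume.restrict Ω), Continuous (H x))
    -- growth bound `|Hₙ(x,ξ)| ≤ C₁(1 + |ξ|^γ)`
    (hGrowth : ∀ n, ∀ᵐ x ∂(volume.restrict Ω),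
      ∀ ξ : EuclideanSpace ℝ (Fin N), |Hn n x ξ| ≤ C₁ * (1 + ‖ξ‖ ^ γ))
    -- for a.e. `x`, `Hₙ(x,·) → H(x,·)` uniformly on compact sets
    (hUnif : ∀ᵐ x ∂(volume.restrict Ω), ∀ K : Set (EuclideanSpace ℝ (Fin N)),
      IsCompact K → TendstoUniformlyOn (fun n ξ => Hn n x ξ) (H x) atTop K)
    (p : ℝ) (hp : γ ≤ p)
    (u : (Fin M → ℝ) → EuclideanSpace ℝ (Fin N))
    (un : ℕ → (Fin M → ℝ) → EuclideanSpace ℝ (Fin N))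
    (hu : MemLp u (ENNReal.ofReal p) (volume.restrict Ω))
    (hun : ∀ n, MemLp (un n) (ENNReal.ofReal p) (volume.restrict Ω))
    -- `uₙ → u` in `L^p(Ω; ℝ^N)`
    (hConv : Tendsto (fun n => lpNorm Ω p (fun x => un n x - u x)) atTop (𝓝 0)) :
    Tendsto (fun n => lpNorm Ω (p / γ) (fun x => Hn n x (un n x) - H x (u x)))
      atTop (𝓝 0) := by
  set μ := volume.restrict Ω with hμdef
  haveI : IsFiniteMeasure μ := ⟨by
    rw [Measure.restrict_apply_univ]; exact hΩbdd.measure_lt_top⟩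
  have hγp : 0 < p := lt_of_lt_of_le hγ hp
  set Q : ℝ≥0∞ := ENNReal.ofReal (p / γ) with hQdef
  set P : ℝ≥0∞ := ENNReal.ofReal p with hPdef
  have hPQ : P / ENNReal.ofReal γ = Q := (ENNReal.ofReal_div_of_pos hγ).symm
  have hQ1 : 1 ≤ Q := by
    rw [hQdef, ← ENNReal.ofReal_one]
    exact ENNReal.ofReal_le_ofReal ((one_le_div hγ).2 hp)
  have hQtop : Q ≠ ∞ := ENNReal.ofReal_ne_top
  have hQmul : Q * ENNReal.ofReal γ = P := by
    rw [hQdef, hPdef, ← ENNReal.ofReal_mul (div_nonneg hγp.le hγ.le),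
      div_mul_cancel₀ _ hγ.ne']
  -- growth bound for `H`
  have hGrowth' : ∀ᵐ x ∂μ, ∀ n, ∀ ξ : EuclideanSpace ℝ (Fin N),
      |Hn n x ξ| ≤ C₁ * (1 + ‖ξ‖ ^ γ) := ae_all_iff.2 hGrowth
  have hHGrowth : ∀ᵐ x ∂μ, ∀ ξ : EuclideanSpace ℝ (Fin N),
      |H x ξ| ≤ C₁ * (1 + ‖ξ‖ ^ γ) := by
    filter_upwards [hGrowth', hUnif] with x hg hux ξ
    have ht : Tendsto (fun n => Hn n x ξ) atTop (𝓝 (H x ξ)) :=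
      tendstoUniformlyOn_singleton_iff_tendsto.1 (hux {ξ} isCompact_singleton)
    exact le_of_tendsto ht.abs (Eventually.of_forall fun n => hg n ξ)
  -- membership of `‖u‖^γ` in `L^Q`
  have hrpw : MemLp (fun x => ‖u x‖ ^ γ) Q μ := by
    have h := hu.norm_rpow_div (ENNReal.ofReal γ)
    rwa [ENNReal.toReal_ofReal hγ.le, hPQ] at h
  -- measurability of the superpositions
  have hFnmeas : ∀ n, AEStronglyMeasurable (fun x => Hn n x (un n x)) μ := fun n =>
    (superpos_aemeas μ (Hn n) (hHnMeas n) (hHnCont n) (hun n).1).aestronglyMeasurable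
  have hFmeas : AEStronglyMeasurable (fun x => H x (u x)) μ :=
    (superpos_aemeas μ H hHMeas hHCont hu.1).aestronglyMeasurable
  -- `H(·,u)` is in `L^Q`
  have hB : MemLp (fun x => C₁ * (1 + ‖u x‖ ^ γ)) Q μ := by
    have h1 : MemLp (fun x => (1:ℝ) + ‖u x‖ ^ γ) Q μ := (memLp_const (1:ℝ)).add hrpw
    exact h1.const_mul C₁
  have hFmem : MemLp (fun x => H x (u x)) Q μ := by
    refine hB.of_le hFmeas ?_
    filter_upwards [hHGrowth] with x hx
    have h0 : 0 ≤ C₁ * (1 + ‖u x‖ ^ γ) := by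
      have := Real.rpow_nonneg (norm_nonneg (u x)) γ
      positivity
    rw [Real.norm_eq_abs, Real.norm_eq_abs, abs_of_nonneg h0]
    exact hx (u x)
  -- difference functions and their `L^Q` control
  set d : ℕ → (Fin M → ℝ) → ℝ := fun n x => ‖un n x - u x‖ ^ γ with hddef
  have hd_mem : ∀ n, MemLp (d n) Q μ := by
    intro n
    have h := ((hun n).sub hu).norm_rpow_div (ENNReal.ofReal γ)
    rwa [ENNReal.toReal_ofReal hγ.le, hPQ] at h
  have hd_tendsto : Tendsto (fun n => eLpNorm (d n) Q μ) atTop (𝓝 0) := by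
    have heq : ∀ n, eLpNorm (d n) Q μ
        = (eLpNorm (fun x => un n x - u x) P μ) ^ γ := by
      intro n
      have := eLpNorm_norm_rpow (fun x => un n x - u x) hγ (p := Q) (μ := μ)
      rw [hQmul] at this
      exact this
    simp only [heq]
    have hcont : Tendsto (
        fun t : ℝ≥0∞ => t ^ γ) (𝓝 0) (𝓝 0) := by
      have := (ENNReal.continuous_rpow_const (y := γ)).tendsto 0
      rwa [ENNReal.zero_rpow_of_pos hγ] at this
    exact hcont.comp hConv
  -- a uniformly integrable dominating family
  set c : ℝ := C₁ * 2 ^ γ with hcdef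
  have hc : 0 < c := by
    have : (0:ℝ) < 2 ^ γ := Real.rpow_pos_of_pos (by norm_num) γ
    positivity
  set G : ℕ → (Fin M → ℝ) → ℝ :=
    (fun _ _ => C₁) + (fun n x => c * d n x) + (fun _ x => c * ‖u x‖ ^ γ) with hGdef
  have hG2_mem : ∀ n, MemLp (fun x => c * d n x) Q μ := fun n => (hd_mem n).const_mul c
  have hGui : UnifIntegrable G Q μ := by
    refine UnifIntegrable.add ?_ ?_ hQ1
      (fun n => aestronglyMeasurable_const.add (hG2_mem n).aestronglyMeasurable)
      fun _ => (hrpw.const_mul c).aestronglyMeasurable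
    · refine UnifIntegrable.add ?_ ?_ hQ1 (fun _ => aestronglyMeasurable_const)
        fun n => (hG2_mem n).aestronglyMeasurable
      · exact unifIntegrable_const hQ1 hQtop (memLp_const C₁)
      · refine unifIntegrable_of_tendsto_Lp_zero hQ1 hQtop hG2_mem ?_
        have heq : ∀ n, eLpNorm (fun x => c * d n x) Q μ
            = ENNReal.ofReal c * eLpNorm (d n) Q μ := by
          intro n
          have := eLpNorm_const_smul (c : ℝ) (d n) (p := Q) (μ := μ)
          simpa [ENNReal.ofReal, Real.enorm_eq_ofReal hc.le, Pi.smul_def, smul_eq_mul] using this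
        simp only [heq]
        have := ENNReal.Tendsto.const_mul (a := ENNReal.ofReal c) hd_tendsto
          (Or.inr ENNReal.ofReal_ne_top)
        simpa using this
    · exact unifIntegrable_const hQ1 hQtop (hrpw.const_mul c)
  -- pointwise domination of Fₙ by G
  have hdom : ∀ n, ∀ᵐ x ∂μ, ‖Hn n x (un n x)‖ ≤ ‖G n x‖ := by
    intro n
    filter_upwards [hGrowth n] with x hx
    have hbd : |Hn n x (un n x)| ≤ C₁ * (1 + ‖un n x‖ ^ γ) := hx (un n x)
    have htri : ‖un n x‖ ≤ ‖un n x - u x‖ + ‖u x‖ := by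
      have := norm_add_le (un n x - u x) (u x)
      simpa using this
    have hr : ‖un n x‖ ^ γ ≤ 2 ^ γ * (‖un n x - u x‖ ^ γ + ‖u x‖ ^ γ) :=
      le_trans (Real.rpow_le_rpow (norm_nonneg _) htri hγ.le)
        (rpow_add_le_aux γ (norm_nonneg _) (norm_nonneg _) hγ)
    have hGval : G n x = C₁ + c * d n x + c * ‖u x‖ ^ γ := by
      simp [hGdef]
    have hGnonneg : 0 ≤ G n x := by
      rw [hGval]
      have h1 : 0 ≤ d n x := Real.rpow_nonneg (norm_nonneg _) γ
      have h2 : 0 ≤ ‖u x‖ ^ γ := Real.rpow_nonneg (norm_nonneg _) γ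
      positivity
    rw [Real.norm_eq_abs, Real.norm_eq_abs, abs_of_nonneg hGnonneg, hGval]
    have : C₁ * (1 + ‖un n x‖ ^ γ) ≤ C₁ + c * d n x + c * ‖u x‖ ^ γ := by
      rw [hcdef, hddef]
      nlinarith [hr, hC₁.le]
    exact le_trans hbd this
  -- uniform integrability of the superpositions
  have hui : UnifIntegrable (fun n x => Hn n x (un n x)) Q μ := by
    intro ε hε
    obtain ⟨δ, hδ, hle⟩ := hGui hε
    refine ⟨δ, hδ, fun n s hs hμs => ?_⟩
    refine le_trans (eLpNorm_mono_ae ?_) (hle n s hs hμs)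
    filter_upwards [hdom n] with x hx
    by_cases hxs : x ∈ s
    · simpa [Set.indicator_apply, hxs, Real.norm_eq_abs] using hx
    · simp [Set.indicator_apply, hxs]
  -- convergence in measure of `uₙ`
  have hconv' : Tendsto (fun n => eLpNorm ((fun x => un n x) - u) P μ) atTop (𝓝 0) := by
    apply hConv.congr
    intro n
    rfl
  have hunMeas : TendstoInMeasure μ (fun n x => un n x) atTop u :=
    tendstoInMeasure_of_tendsto_eLpNorm (p := P)
      (by simpa [hPdef] using (ENNReal.ofReal_pos.2 hγp).ne')
      (fun n => (hun n).1) hu.1 hconv'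
  -- main subsequence argument via Vitali's theorem
  refine tendsto_of_subseq_tendsto fun ns hns => ?_
  obtain ⟨ms, hms_mono, hms⟩ :=
    TendstoInMeasure.exists_seq_tendsto_ae (fun ε hε => (hunMeas ε hε).comp hns)
  refine ⟨ms, ?_⟩
  set φ : ℕ → ℕ := fun k => ns (ms k) with hφdef
  have hφ : Tendsto φ atTop atTop := hns.comp hms_mono.tendsto_atTop
  have hae : ∀ᵐ x ∂μ, Tendsto (fun k => Hn (φ k) x (un (φ k) x)) atTop
      (𝓝 (H x (u x))) := by
    filter_upwards [hms, hUnif, hHCont] with x hx hxu hxc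
    set K : Set (EuclideanSpace ℝ (Fin N)) :=
      insert (u x) (Set.range fun k => un (φ k) x) with hKdef
    have hK : IsCompact K := hx.isCompact_insert_range
    have hKuniform : TendstoUniformlyOn (fun k ξ => Hn (φ k) x ξ) (H x) atTop K := by
      have h := hxu K hK
      rw [Metric.tendstoUniformlyOn_iff] at h ⊢
      intro ε hε
      exact hφ.eventually (h ε hε)
    refine hKuniform.tendsto_comp hxc.continuousWithinAt ?_
    refine tendsto_nhdsWithin_of_tendsto_nhds_of_eventually_within _ hx ?_
    exact Eventually.of_forall fun k => Set.subset_insert _ _ (Set.mem_range_self k)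
  have := tendsto_Lp_finite_of_tendsto_ae hQ1 hQtop
    (f := fun k x => Hn (φ k) x (un (φ k) x)) (g := fun x => H x (u x))
    (fun k => hFnmeas (φ k)) hFmem
    (fun ε hε => by
      obtain ⟨δ, hδ, h'⟩ := hui hε
      exact ⟨δ, hδ, fun k s hs hμs => h' (φ k) s hs hμs⟩) hae
  exact this
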